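/- Let M and N be unital C*-algebras, φ : M → N a Jordan homomorphism, and x, y ∈ M self-adjoint elements with xy = yx. Then φ(x)φ(y) = φ(y)φ(x) and φ(xy) = φ(x)φ(y). -/

import Mathlib

open Filter

open Nat in
/-- Kleinecke–Shirokov style lemma: in a C*-algebra, if `a` and `b` are selfadjoint and
both commute with their commutator `c = a*b - b*a`, then `c = 0`. -/
private theorem comm_aux {N : Type*}
    [NormedRing N] [StarRing N] [CStarRing N] [NormedAlgebra ℂ N]
    (a b : N) (ha : a * (a * b - b * a) = (a * b - b * a) * a)
    (hb : b * (a * b - b * a) = (a * b - b * a) * b)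
    (hsa : star a = a) (hsb : star b = b) :
    a * b = b * a := by
  set c := a * b - b * a with hcdef
  have hac : Commute a c := ha
  have hbc : Commute b c := hb
  -- derivation identity
  have hD : ∀ m : ℕ, a * b ^ m - b ^ m * a = m • (c * b ^ (m - 1)) := by
    intro m
    induction m with
    | zero => simp
    | succ k ih =>
      have hpow : b ^ (k + 1) = b * b ^ k := _root_.pow_succ' b k
      rw [hpow]
      have expand : a * (b * b ^ k) - (b * b ^ k) * a
          = c * b ^ k + b * (a * b ^ k - b ^ k * a) := by
        rw [hcdef]; noncomm_ring
      rw [expand, ih, Nat.add_sub_cancel]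
      rcases k with _ | j
      · simp
      · have hb1 : b * ((j + 1) • (c * b ^ (j + 1 - 1))) = (j + 1) • (c * b ^ (j + 1)) := by
          rw [Nat.add_sub_cancel, mul_smul_comm]
          congr 1
          rw [← mul_assoc, hbc.eq, mul_assoc, ← _root_.pow_succ']
        rw [hb1, succ_nsmul (c * b ^ (j + 1)) (j + 1)]
        exact add_comm _ _
  have hG : ∀ n k : ℕ, a * (c ^ k * b ^ n) - (c ^ k * b ^ n) * a
      = n • (c ^ (k + 1) * b ^ (n - 1)) := by
    intro n k
    have hck : a * c ^ k = c ^ k * a := (hac.pow_right k).eq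
    have h1 : a * (c ^ k * b ^ n) - (c ^ k * b ^ n) * a
        = c ^ k * (a * b ^ n - b ^ n * a) := by
      rw [mul_sub, ← mul_assoc, hck, mul_assoc, mul_assoc]
    rw [h1, hD n, mul_smul_comm, ← mul_assoc, ← pow_succ]
  -- norm bound for the derivation
  have hnorm : ∀ w : N, ‖a * w - w * a‖ ≤ 2 * ‖a‖ * ‖w‖ := by
    intro w
    calc ‖a * w - w * a‖ ≤ ‖a * w‖ + ‖w * a‖ := norm_sub_le _ _
      _ ≤ ‖a‖ * ‖w‖ + ‖w‖ * ‖a‖ := add_le_add (norm_mul_le _ _) (norm_mul_le _ _)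
      _ = 2 * ‖a‖ * ‖w‖ := by ring
  -- descending factorial estimate
  have hB : ∀ n k : ℕ, (n.descFactorial k : ℝ) * ‖c ^ k * b ^ (n - k)‖
      ≤ (2 * ‖a‖) ^ k * ‖b ^ n‖ := by
    intro n k
    induction k with
    | zero => simp
    | succ k ih =>
      have hstep := hG (n - k) k
      have hnk : n - k - 1 = n - (k + 1) := by omega
      rw [hnk] at hstep
      have hle : ((n - k : ℕ) : ℝ) * ‖c ^ (k + 1) * b ^ (n - (k + 1))‖
          ≤ 2 * ‖a‖ * ‖c ^ k * b ^ (n - k)‖ := by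
        have e1 : ((n - k : ℕ) : ℝ) * ‖c ^ (k + 1) * b ^ (n - (k + 1))‖
            = ‖(n - k) • (c ^ (k + 1) * b ^ (n - (k + 1)))‖ := by
          rw [← Nat.cast_smul_eq_nsmul ℝ, norm_smul, Real.norm_natCast]
        rw [e1, ← hstep]
        exact hnorm _
      have hdF : (n.descFactorial (k + 1) : ℝ) = (n - k : ℕ) * n.descFactorial k := by
        rw [Nat.descFactorial_succ]; push_cast; ring
      have hdFnn : (0 : ℝ) ≤ (n.descFactorial k : ℝ) := Nat.cast_nonneg _
      calc (n.descFactorial (k + 1) : ℝ) * ‖c ^ (k + 1) * b ^ (n - (k + 1))‖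
          = (n.descFactorial k : ℝ) * (((n - k : ℕ) : ℝ) * ‖c ^ (k + 1) * b ^ (n - (k + 1))‖) := by
            rw [hdF]; ring
        _ ≤ (n.descFactorial k : ℝ) * (2 * ‖a‖ * ‖c ^ k * b ^ (n - k)‖) :=
            mul_le_mul_of_nonneg_left hle hdFnn
        _ = 2 * ‖a‖ * ((n.descFactorial k : ℝ) * ‖c ^ k * b ^ (n - k)‖) := by ring
        _ ≤ 2 * ‖a‖ * ((2 * ‖a‖) ^ k * ‖b ^ n‖) := by
            apply mul_le_mul_of_nonneg_left ih
            positivity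
        _ = (2 * ‖a‖) ^ (k + 1) * ‖b ^ n‖ := by ring
  have hfac : ∀ n : ℕ, (n ! : ℝ) * ‖c ^ n‖ ≤ (2 * ‖a‖) ^ n * ‖b ^ n‖ := by
    intro n
    have := hB n n
    rwa [Nat.sub_self, pow_zero, mul_one, Nat.descFactorial_self] at this
  -- star properties of c
  have hsc : star c = -c := by
    rw [hcdef, star_sub, star_mul, star_mul, hsa, hsb, neg_sub]
  have hselfcc : IsSelfAdjoint (c * c) := by
    rw [IsSelfAdjoint, star_mul, hsc, neg_mul_neg]
  have hnormcc : ‖c * c‖ = ‖c‖ * ‖c‖ := by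
    have h := CStarRing.norm_star_mul_self (x := c)
    rwa [hsc, neg_mul, norm_neg] at h
  -- norm of powers of c (normal element)
  have hpow : ∀ k : ℕ, ‖c ^ (2 ^ (k + 1))‖ = ‖c‖ ^ (2 ^ (k + 1)) := by
    intro k
    have h2 : (2 : ℕ) ^ (k + 1) = 2 * 2 ^ k := by rw [pow_succ]; ring
    have e1 : c ^ (2 ^ (k + 1)) = (c * c) ^ (2 ^ k) := by
      rw [h2, pow_mul, sq]
    have e2 : ‖(c * c) ^ 2 ^ k‖₊ = ‖c * c‖₊ ^ 2 ^ k := hselfcc.nnnorm_pow_two_pow k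
    have e2' : ‖(c * c) ^ 2 ^ k‖ = ‖c * c‖ ^ 2 ^ k := by
      have h := congrArg (fun t : NNReal => (t : ℝ)) e2
      simpa using h
    rw [e1, e2', hnormcc, h2, pow_mul, sq]
  -- main estimate
  suffices hc0 : c = 0 by
    have h0 : a * b - b * a = 0 := hc0
    exact sub_eq_zero.mp h0
  rw [← norm_eq_zero]
  by_contra hne
  have hrpos : 0 < ‖c‖ := lt_of_le_of_ne (norm_nonneg c) (Ne.symm hne)
  set K : ℝ := 2 * ‖a‖ * ‖b‖ with hK
  have key : ∀ k : ℕ, (((2 ^ (k + 1)) ! : ℕ) : ℝ) * ‖c‖ ^ (2 ^ (k + 1)) ≤ K ^ (2 ^ (k + 1)) := by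
    intro k
    have h1 := hfac (2 ^ (k + 1))
    rw [hpow k] at h1
    have h2 : ‖b ^ (2 ^ (k + 1))‖ ≤ ‖b‖ ^ (2 ^ (k + 1)) :=
      norm_pow_le' b (pow_pos (by norm_num) _)
    calc (((2 ^ (k + 1)) ! : ℕ) : ℝ) * ‖c‖ ^ (2 ^ (k + 1))
        ≤ (2 * ‖a‖) ^ (2 ^ (k + 1)) * ‖b ^ (2 ^ (k + 1))‖ := h1
      _ ≤ (2 * ‖a‖) ^ (2 ^ (k + 1)) * ‖b‖ ^ (2 ^ (k + 1)) := by
          apply mul_le_mul_of_nonneg_left h2; positivity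
      _ = K ^ (2 ^ (k + 1)) := by rw [hK]; exact (mul_pow _ _ _).symm
  set Mq : ℝ := K / ‖c‖ with hMq
  have hMqk : ∀ k : ℕ, (((2 ^ (k + 1)) ! : ℕ) : ℝ) ≤ Mq ^ (2 ^ (k + 1)) := by
    intro k
    rw [hMq, div_pow, le_div_iff₀ (pow_pos hrpos _)]
    exact key k
  have ht := FloorSemiring.tendsto_pow_div_factorial_atTop (K := ℝ) Mq
  have hev : ∀ᶠ n : ℕ in atTop, Mq ^ n / (n ! : ℕ) < 1 :=
    ht.eventually (Filter.Tendsto.eventually_lt_const (by norm_num) tendsto_id)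
  obtain ⟨n₀, hn₀⟩ := eventually_atTop.mp hev
  have hle : n₀ ≤ 2 ^ (n₀ + 1) := by
    calc n₀ ≤ 2 ^ n₀ := (Nat.lt_two_pow_self (n := n₀)).le
      _ ≤ 2 ^ (n₀ + 1) := Nat.pow_le_pow_right (by norm_num) (Nat.le_succ _)
  have hlt := hn₀ (2 ^ (n₀ + 1)) hle
  have hge : (1 : ℝ) ≤ Mq ^ (2 ^ (n₀ + 1)) / ((2 ^ (n₀ + 1)) ! : ℕ) := by
    rw [le_div_iff₀ (by exact_mod_cast Nat.factorial_pos _)]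
    simpa using hMqk n₀
  linarith

/-- A Jordan homomorphism between unital C*-algebras is multiplicative on commuting
self-adjoint elements, and their images commute. -/
theorem jordan_hom_mult_on_commuting_selfadjoint
    {M N : Type*}
    [NormedRing M] [StarRing M] [CStarRing M] [NormedAlgebra ℂ M]
    [StarModule ℂ M] [CompleteSpace M]
    [NormedRing N] [StarRing N] [CStarRing N] [NormedAlgebra ℂ N]
    [StarModule ℂ N] [CompleteSpace N]
    (φ : M →ₗ[ℂ] N)
    (hunit : φ 1 = 1)
    (hstar : ∀ x : M, φ (star x) = star (φ x))
    (hsq : ∀ x : M, φ (x ^ 2) = φ x ^ 2)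
    (x y : M) (hx : star x = x) (hy : star y = y) (hxy : x * y = y * x) :
    φ x * φ y = φ y * φ x ∧ φ (x * y) = φ x * φ y := by
  -- Jordan product is preserved
  have hJ : ∀ a b : M, φ (a * b + b * a) = φ a * φ b + φ b * φ a := by
    intro a b
    have e1 : (a + b) ^ 2 = a ^ 2 + (a * b + b * a) + b ^ 2 := by noncomm_ring
    have hL : φ ((a + b) ^ 2) = φ (a ^ 2) + φ (a * b + b * a) + φ (b ^ 2) := by
      rw [e1, map_add, map_add]
    have hR : φ (a + b) ^ 2 = φ a ^ 2 + (φ a * φ b + φ b * φ a) + φ b ^ 2 := by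
      rw [map_add]; noncomm_ring
    have h := hsq (a + b)
    rw [hL, hR, hsq, hsq] at h
    exact add_left_cancel (add_right_cancel h)
  -- the image of each selfadjoint commutes with the commutator
  have main : ∀ a b : M, a * b = b * a →
      φ a * (φ a * φ b - φ b * φ a) = (φ a * φ b - φ b * φ a) * φ a := by
    intro a b hab
    set u := φ a
    set v := φ b
    -- key identity in M
    have t1 : a * (a * b) = a ^ 2 * b := by rw [← mul_assoc, ← pow_two]
    have t3 : (a * b) * a = a ^ 2 * b := by rw [mul_assoc, ← hab, t1]
    have t2 : a * (b * a) = a ^ 2 * b := by rw [← hab, t1]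
    have t4 : (b * a) * a = a ^ 2 * b := by rw [← hab]; exact t3
    have t5 : b * a ^ 2 = a ^ 2 * b := by
      rw [pow_two, ← mul_assoc, ← hab, mul_assoc, ← hab, ← mul_assoc, ← pow_two]
    have keyM : a * (a * b + b * a) + (a * b + b * a) * a
        = (a ^ 2 * b + b * a ^ 2) + (a ^ 2 * b + b * a ^ 2) := by
      rw [mul_add, add_mul, t1, t2, t3, t4, t5]
    have h1 := hJ a (a * b + b * a)
    rw [keyM, map_add, hJ (a ^ 2) b, hsq a, hJ a b] at h1
    have hdiff : u * (u * v - v * u) - (u * v - v * u) * u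
        = ((φ a ^ 2 * v + v * φ a ^ 2) + (φ a ^ 2 * v + v * φ a ^ 2))
          - (u * (u * v + v * u) + (u * v + v * u) * u) := by noncomm_ring
    rw [h1, sub_self] at hdiff
    exact sub_eq_zero.mp hdiff
  have hsu : star (φ x) = φ x := by rw [← hstar, hx]
  have hsv : star (φ y) = φ y := by rw [← hstar, hy]
  have hcu := main x y hxy
  have hcv' := main y x hxy.symm
  have hcv : φ y * (φ x * φ y - φ y * φ x) = (φ x * φ y - φ y * φ x) * φ y := by
    have e : φ x * φ y - φ y * φ x = -(φ y * φ x - φ x * φ y) := by noncomm_ring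
    rw [e, mul_neg, neg_mul, hcv']
  have hcomm : φ x * φ y = φ y * φ x := comm_aux (φ x) (φ y) hcu hcv hsu hsv
  refine ⟨hcomm, ?_⟩
  have h2 : (2 : ℂ) • φ (x * y) = (2 : ℂ) • (φ x * φ y) := by
    rw [two_smul, two_smul, ← map_add]
    have e : x * y + x * y = x * y + y * x := by rw [hxy]
    rw [e, hJ x y, hcomm]
  exact smul_right_injective N (by norm_num : (2 : ℂ) ≠ 0) h2
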